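/- Let Θ be the k-dimensional probability simplex, L : Θ → ℝ a continuous strictly positive function, f : Θ → ℝ bounded continuous, and M a set of probability densities on Θ such that inf_{p∈M} E_p(f) = inf_Θ f and sup_{p∈M} E_p(f) = sup_Θ f (vacuous prior expectations). Then the posterior expectations obtained by Bayes updating with likelihood L are also vacuous: inf_{p∈M} E_p(f|L) = inf_Θ f and sup_{p∈M} E_p(f|L) = sup_Θ f, where E_p(f|L) = ∫ f L p dθ / ∫ L p dθ. -/

import Mathlib

open MeasureTheory Set Filter Topology

/-- Key corollary: with a continuous strictly positive likelihood `L` on the simplex,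
vacuous prior expectations of `f` (lower = `inf f`, upper = `sup f`) imply vacuous
posterior expectations of `f` after Bayes updating. -/
theorem stmt_7 (k : ℕ) (hk : 0 < k)
    (μ : Measure (Fin k → ℝ))
    (hsupp : ∀ᵐ θ ∂μ, θ ∈ stdSimplex ℝ (Fin k))
    (M : Set ((Fin k → ℝ) → ℝ))
    (hM : ∀ p ∈ M, (∀ θ, 0 ≤ p θ) ∧ Integrable p μ ∧ ∫ θ, p θ ∂μ = 1)
    (f : (Fin k → ℝ) → ℝ) (hf : ContinuousOn f (stdSimplex ℝ (Fin k)))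
    (L : (Fin k → ℝ) → ℝ) (hL : ContinuousOn L (stdSimplex ℝ (Fin k)))
    (hLpos : ∀ θ ∈ stdSimplex ℝ (Fin k), 0 < L θ)
    (hpriorinf : sInf ((fun p => ∫ θ, f θ * p θ ∂μ) '' M)
        = sInf (f '' stdSimplex ℝ (Fin k)))
    (hpriorsup : sSup ((fun p => ∫ θ, f θ * p θ ∂μ) '' M)
        = sSup (f '' stdSimplex ℝ (Fin k))) :
    sInf ((fun p => (∫ θ, f θ * L θ * p θ ∂μ) / ∫ θ, L θ * p θ ∂μ) '' M)
        = sInf (f '' stdSimplex ℝ (Fin k)) ∧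
    sSup ((fun p => (∫ θ, f θ * L θ * p θ ∂μ) / ∫ θ, L θ * p θ ∂μ) '' M)
        = sSup (f '' stdSimplex ℝ (Fin k)) := by
  classical
  set S := stdSimplex ℝ (Fin k) with hSdef
  -- Basic facts about the simplex
  have hSne : S.Nonempty := ⟨_, single_mem_stdSimplex ℝ (⟨0, hk⟩ : Fin k)⟩
  have hScpt : IsCompact S := isCompact_stdSimplex ℝ (Fin k)
  have hSmeas : MeasurableSet S := hScpt.isClosed.measurableSet
  have hrestrict : μ.restrict S = μ :=
    Measure.restrict_eq_self_of_ae_mem hsupp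
  -- a.e. measurability of f and L
  have hfm : AEStronglyMeasurable f μ := by
    have h : AEMeasurable f (μ.restrict S) := hf.aemeasurable hSmeas
    rw [hrestrict] at h
    exact h.aestronglyMeasurable
  have hLm : AEStronglyMeasurable L μ := by
    have h : AEMeasurable L (μ.restrict S) := hL.aemeasurable hSmeas
    rw [hrestrict] at h
    exact h.aestronglyMeasurable
  -- extrema of f
  have hfS : IsCompact (f '' S) := hScpt.image_of_continuousOn hf
  have hfSne : (f '' S).Nonempty := hSne.image f
  set m := sInf (f '' S) with hmdef
  set b := sSup (f '' S) with hbdef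
  have hmle : ∀ θ ∈ S, m ≤ f θ := fun θ hθ =>
    csInf_le hfS.bddBelow ⟨θ, hθ, rfl⟩
  have hble : ∀ θ ∈ S, f θ ≤ b := fun θ hθ =>
    le_csSup hfS.bddAbove ⟨θ, hθ, rfl⟩
  -- extrema of L
  have hLS : IsCompact (L '' S) := hScpt.image_of_continuousOn hL
  have hLSne : (L '' S).Nonempty := hSne.image L
  set c := sInf (L '' S) with hcdef
  set D := sSup (L '' S) with hDdef
  have hcS : c ∈ L '' S := hLS.sInf_mem hLSne
  have hcpos : 0 < c := by
    obtain ⟨θ, hθ, hθe⟩ := hcS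
    rw [← hθe]; exact hLpos θ hθ
  have hcle : ∀ θ ∈ S, c ≤ L θ := fun θ hθ =>
    csInf_le hLS.bddBelow ⟨θ, hθ, rfl⟩
  have hDle : ∀ θ ∈ S, L θ ≤ D := fun θ hθ =>
    le_csSup hLS.bddAbove ⟨θ, hθ, rfl⟩
  have hDpos : 0 < D := by
    obtain ⟨θ, hθ, hθe⟩ := hcS
    exact lt_of_lt_of_le hcpos (hθe ▸ hDle θ hθ)
  -- key facts for each p ∈ M
  have key : ∀ p ∈ M,
      (∫ θ, f θ * p θ ∂μ) - m ≥ 0 ∧ b - (∫ θ, f θ * p θ ∂μ) ≥ 0 ∧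
      m ≤ (∫ θ, f θ * L θ * p θ ∂μ) / (∫ θ, L θ * p θ ∂μ) ∧
      (∫ θ, f θ * L θ * p θ ∂μ) / (∫ θ, L θ * p θ ∂μ) ≤ b ∧
      (∫ θ, f θ * L θ * p θ ∂μ) / (∫ θ, L θ * p θ ∂μ)
        ≤ m + (D / c) * ((∫ θ, f θ * p θ ∂μ) - m) ∧
      b - (D / c) * (b - (∫ θ, f θ * p θ ∂μ))
        ≤ (∫ θ, f θ * L θ * p θ ∂μ) / (∫ θ, L θ * p θ ∂μ) := by
    intro p hp
    obtain ⟨hp0, hpint, hpone⟩ := hM p hp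
    -- integrability
    have hILp : Integrable (fun θ => L θ * p θ) μ := by
      refine hpint.bdd_mul (c := D) hLm ?_
      filter_upwards [hsupp] with θ hθ
      rw [Real.norm_eq_abs, abs_of_pos (hLpos θ hθ)]
      exact hDle θ hθ
    have hfbdd : ∀ᵐ θ ∂μ, ‖f θ‖ ≤ max |b| |m| := by
      filter_upwards [hsupp] with θ hθ
      have h1 := hmle θ hθ
      have h2 := hble θ hθ
      rw [Real.norm_eq_abs, abs_le]
      constructor
      · linarith [neg_abs_le m, le_max_right |b| |m|]
      · linarith [le_abs_self b, le_max_left |b| |m|]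
    have hIfp : Integrable (fun θ => f θ * p θ) μ :=
      hpint.bdd_mul (c := max |b| |m|) hfm hfbdd
    have hIfLp : Integrable (fun θ => f θ * L θ * p θ) μ := by
      have h : Integrable (fun θ => f θ * (L θ * p θ)) μ :=
        hILp.bdd_mul (c := max |b| |m|) hfm hfbdd
      simpa [mul_assoc] using h
    set I1 := ∫ θ, L θ * p θ ∂μ with hI1def
    set I2 := ∫ θ, f θ * L θ * p θ ∂μ with hI2def
    set E := ∫ θ, f θ * p θ ∂μ with hEdef
    -- I1 ≥ c > 0
    have hI1c : c ≤ I1 := by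
      have h1 : ∫ θ, c * p θ ∂μ ≤ I1 := by
        refine integral_mono_ae (hpint.const_mul c) hILp ?_
        filter_upwards [hsupp] with θ hθ
        exact mul_le_mul_of_nonneg_right (hcle θ hθ) (hp0 θ)
      rwa [integral_const_mul, hpone, mul_one] at h1
    have hI1pos : 0 < I1 := lt_of_lt_of_le hcpos hI1c
    -- m * I1 ≤ I2 ≤ b * I1
    have hmI2 : m * I1 ≤ I2 := by
      have h1 : ∫ θ, m * (L θ * p θ) ∂μ ≤ I2 := by
        refine integral_mono_ae (hILp.const_mul m) hIfLp ?_
        filter_upwards [hsupp] with θ hθ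
        have := mul_le_mul_of_nonneg_right
          (mul_le_mul_of_nonneg_right (hmle θ hθ) (hLpos θ hθ).le) (hp0 θ)
        simpa [mul_assoc] using this
      rwa [integral_const_mul] at h1
    have hI2b : I2 ≤ b * I1 := by
      have h1 : I2 ≤ ∫ θ, b * (L θ * p θ) ∂μ := by
        refine integral_mono_ae hIfLp (hILp.const_mul b) ?_
        filter_upwards [hsupp] with θ hθ
        have := mul_le_mul_of_nonneg_right
          (mul_le_mul_of_nonneg_right (hble θ hθ) (hLpos θ hθ).le) (hp0 θ)
        simpa [mul_assoc] using this
      rwa [integral_const_mul] at h1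
    -- prior expectation bounds: m ≤ E ≤ b
    have hmE : m ≤ E := by
      have h1 : ∫ θ, m * p θ ∂μ ≤ E := by
        refine integral_mono_ae (hpint.const_mul m) hIfp ?_
        filter_upwards [hsupp] with θ hθ
        exact mul_le_mul_of_nonneg_right (hmle θ hθ) (hp0 θ)
      rwa [integral_const_mul, hpone, mul_one] at h1
    have hEb : E ≤ b := by
      have h1 : E ≤ ∫ θ, b * p θ ∂μ := by
        refine integral_mono_ae hIfp (hpint.const_mul b) ?_
        filter_upwards [hsupp] with θ hθ
        exact mul_le_mul_of_nonneg_right (hble θ hθ) (hp0 θ)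
      rwa [integral_const_mul, hpone, mul_one] at h1
    -- slack bounds
    have hub : I2 - m * I1 ≤ D * (E - m) := by
      have h1 : ∫ θ, (f θ * L θ * p θ - m * (L θ * p θ)) ∂μ
          ≤ ∫ θ, D * (f θ * p θ - m * p θ) ∂μ := by
        refine integral_mono_ae (hIfLp.sub (hILp.const_mul m))
          ((hIfp.sub (hpint.const_mul m)).const_mul D) ?_
        filter_upwards [hsupp] with θ hθ
        have h2 : (f θ - m) * (L θ * p θ) ≤ (f θ - m) * (D * p θ) := by
          refine mul_le_mul_of_nonneg_left ?_ (by linarith [hmle θ hθ])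
          exact mul_le_mul_of_nonneg_right (hDle θ hθ) (hp0 θ)
        nlinarith [h2]
      rw [integral_sub hIfLp (hILp.const_mul m), integral_const_mul,
        integral_const_mul, integral_sub hIfp (hpint.const_mul m),
        integral_const_mul, hpone, mul_one] at h1
      exact h1
    have hlb : b * I1 - I2 ≤ D * (b - E) := by
      have h1 : ∫ θ, (b * (L θ * p θ) - f θ * L θ * p θ) ∂μ
          ≤ ∫ θ, D * (b * p θ - f θ * p θ) ∂μ := by
        refine integral_mono_ae ((hILp.const_mul b).sub hIfLp)
          (((hpint.const_mul b).sub hIfp).const_mul D) ?_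
        filter_upwards [hsupp] with θ hθ
        have h2 : (b - f θ) * (L θ * p θ) ≤ (b - f θ) * (D * p θ) := by
          refine mul_le_mul_of_nonneg_left ?_ (by linarith [hble θ hθ])
          exact mul_le_mul_of_nonneg_right (hDle θ hθ) (hp0 θ)
        nlinarith [h2]
      rw [integral_sub (hILp.const_mul b) hIfLp, integral_const_mul,
        integral_const_mul, integral_sub (hpint.const_mul b) hIfp,
        integral_const_mul, hpone, mul_one] at h1
      exact h1
    refine ⟨by linarith, by linarith, ?_, ?_, ?_, ?_⟩
    · rw [le_div_iff₀ hI1pos]; linarith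
    · rw [div_le_iff₀ hI1pos]; linarith
    · have h4 : (I2 - m * I1) / I1 ≤ D * (E - m) / c :=
        div_le_div₀ (mul_nonneg hDpos.le (by linarith)) hub hcpos hI1c
      have h5 : (I2 - m * I1) / I1 = I2 / I1 - m := by
        rw [sub_div, mul_div_assoc, div_self hI1pos.ne', mul_one]
      have h6 : D * (E - m) / c = D / c * (E - m) := by ring
      linarith
    · have h4 : (b * I1 - I2) / I1 ≤ D * (b - E) / c :=
        div_le_div₀ (mul_nonneg hDpos.le (by linarith)) hlb hcpos hI1c
      have h5 : (b * I1 - I2) / I1 = b * I1 / I1 - I2 / I1 := sub_div _ _ _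
      have h5' : b * I1 / I1 = b := mul_div_cancel_right₀ b hI1pos.ne'
      have h6 : D * (b - E) / c = D / c * (b - E) := by ring
      linarith
  -- now conclude
  rcases M.eq_empty_or_nonempty with hMe | ⟨p0, hp0M⟩
  · subst hMe
    simp only [image_empty, Real.sInf_empty, Real.sSup_empty] at *
    exact ⟨hpriorinf, hpriorsup⟩
  · set T := (fun p => (∫ θ, f θ * L θ * p θ ∂μ) / ∫ θ, L θ * p θ ∂μ) '' M
      with hTdef
    set P := (fun p => ∫ θ, f θ * p θ ∂μ) '' M with hPdef
    have hTne : T.Nonempty := ⟨_, ⟨p0, hp0M, rfl⟩⟩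
    have hPne : P.Nonempty := ⟨_, ⟨p0, hp0M, rfl⟩⟩
    have hTlow : ∀ x ∈ T, m ≤ x := by
      rintro x ⟨p, hp, rfl⟩; exact (key p hp).2.2.1
    have hThigh : ∀ x ∈ T, x ≤ b := by
      rintro x ⟨p, hp, rfl⟩; exact (key p hp).2.2.2.1
    have hTbb : BddBelow T := ⟨m, hTlow⟩
    have hTba : BddAbove T := ⟨b, hThigh⟩
    constructor
    · refine le_antisymm ?_ (le_csInf hTne hTlow)
      by_contra h
      push_neg at h
      set δ := sInf T - m with hδdef
      have hδpos : 0 < δ := by simp [hδdef]; linarith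
      have hε : 0 < δ * c / D := by positivity
      have h2 : sInf P < m + δ * c / D := by
        rw [hpriorinf]; linarith
      obtain ⟨x, ⟨p, hpM, rfl⟩, hx⟩ := exists_lt_of_csInf_lt hPne h2
      have hkey := (key p hpM).2.2.2.2.1
      have hE0 := (key p hpM).1
      have h5 : (D / c) * ((∫ θ, f θ * p θ ∂μ) - m) < (D / c) * (δ * c / D) := by
        refine mul_lt_mul_of_pos_left (by linarith) (by positivity)
      have h6 : (D / c) * (δ * c / D) = δ := by
        field_simp
      have h7 : (∫ θ, f θ * L θ * p θ ∂μ) / (∫ θ, L θ * p θ ∂μ) < m + δ := by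
        rw [h6] at h5; linarith
      have h8 := csInf_le hTbb ⟨p, hpM, rfl⟩
      simp only [hδdef] at h7
      linarith
    · refine le_antisymm (csSup_le hTne hThigh) ?_
      by_contra h
      push_neg at h
      set δ := b - sSup T with hδdef
      have hδpos : 0 < δ := by simp [hδdef]; linarith
      have hε : 0 < δ * c / D := by positivity
      have h2 : b - δ * c / D < sSup P := by
        rw [hpriorsup]; linarith
      obtain ⟨x, ⟨p, hpM, rfl⟩, hx⟩ := exists_lt_of_lt_csSup hPne h2
      have hkey := (key p hpM).2.2.2.2.2
      have hE0 := (key p hpM).2.1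
      have h5 : (D / c) * (b - (∫ θ, f θ * p θ ∂μ)) < (D / c) * (δ * c / D) := by
        refine mul_lt_mul_of_pos_left (by linarith) (by positivity)
      have h6 : (D / c) * (δ * c / D) = δ := by
        field_simp
      have h7 : b - δ < (∫ θ, f θ * L θ * p θ ∂μ) / (∫ θ, L θ * p θ ∂μ) := by
        rw [h6] at h5; linarith
      have h8 := le_csSup hTba ⟨p, hpM, rfl⟩
      simp only [hδdef] at h7
      linarith
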